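/- Let I = (a^3 b^2, b^3 c^2, a^2 c^3, abc) in S = K[a,b,c]. Then L = {a^3 b^2, b^3 c^2, a^2 c^3} is a dominant subset of G(I) of maximum cardinality among dominant subsets, yet proj dim(S/I) = 2. -/

import Mathlib

open CategoryTheory

/-- The projective dimension of a module `M` over `R`: the least `d` such that
`Ext^{d+1}(M, N) = 0` for all modules `N` (and `⊤` if no such `d` exists). -/
noncomputable def projDim (R : Type) [CommRing R] (M : ModuleCat R) : ℕ∞ :=
  sInf ((fun d : ℕ => (d : ℕ∞)) ''
    {d : ℕ | ∀ N : ModuleCat R, Subsingleton (((Ext R (ModuleCat R) (d + 1)).obj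
      (Opposite.op M)).obj N)})

def DominantSet {n : ℕ} (L : Finset (Fin n → ℕ)) : Prop :=
  ∀ v ∈ L, ∃ i : Fin n, ∀ w ∈ L, w ≠ v → w i < v i

open MvPolynomial

instance {n : ℕ} (L : Finset (Fin n → ℕ)) : Decidable (DominantSet L) := by
  unfold DominantSet; infer_instance

set_option maxHeartbeats 1600000


open MvPolynomial

namespace PdAux

variable (K : Type) [Field K]

local notation "S" => MvPolynomial (Fin 3) K

/-- substitute `X k := 0`. -/
noncomputable def σ (k : Fin 3) : S →ₐ[K] S :=
  aeval (fun i => if i = k then 0 else X i)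

lemma σ_X (k i : Fin 3) : σ K k (X i) = if i = k then 0 else X i := by
  simp [σ]

lemma σ_idem (k : Fin 3) (p : S) : σ K k (σ K k p) = σ K k p := by
  show (σ K k) ((σ K k) p) = _
  rw [σ, comp_aeval_apply]
  have : (fun i => (aeval fun i => if i = k then 0 else X i : S →ₐ[K] S) (if i = k then 0 else X i)) = (fun i => if i = k then 0 else X i) := by
    funext i
    by_cases h : i = k <;> simp [h]
  rw [this]

lemma dvd_sub_σ (k : Fin 3) (p : S) : X k ∣ p - σ K k p := by
  induction p using MvPolynomial.induction_on with
  | C a => simp [σ]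
  | add p q hp hq =>
      have : p + q - σ K k (p + q) = (p - σ K k p) + (q - σ K k q) := by
        rw [map_add]; ring
      rw [this]; exact dvd_add hp hq
  | mul_X p i hp =>
      rw [map_mul, σ_X]
      by_cases h : i = k
      · subst h
        simp only [if_pos]
        rw [mul_zero, sub_zero]
        exact ⟨p, mul_comm _ _⟩
      · rw [if_neg h]
        have : p * X i - σ K k p * X i = (p - σ K k p) * X i := by ring
        rw [this]; exact hp.mul_right _

lemma X_pow_ne (i : Fin 3) (n : ℕ) : (X i : S) ^ n ≠ 0 :=
  pow_ne_zero _ (X_ne_zero i)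

lemma syz (f0 f1 f2 f3 : S)
    (hf : f0 * (X 0 ^ 3 * X 1 ^ 2) + f1 * (X 1 ^ 3 * X 2 ^ 2) + f2 * (X 0 ^ 2 * X 2 ^ 3)
        + f3 * (X 0 * X 1 * X 2) = 0) :
    ∃ q0 q1 q2 : S, f0 = X 2 * q0 ∧ f1 = X 0 * q1 ∧ f2 = X 1 * q2 ∧
      f3 = -(X 0 ^ 2 * X 1 * q0 + X 1 ^ 2 * X 2 * q1 + X 0 * X 2 ^ 2 * q2) := by
  obtain ⟨q0, h0⟩ := dvd_sub_σ K 2 f0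
  obtain ⟨q1, h1⟩ := dvd_sub_σ K 0 f1
  obtain ⟨q2, h2⟩ := dvd_sub_σ K 1 f2
  have hf' : (σ K 2 f0) * (X 0 ^ 3 * X 1 ^ 2) + (σ K 0 f1) * (X 1 ^ 3 * X 2 ^ 2)
      + (σ K 1 f2) * (X 0 ^ 2 * X 2 ^ 3)
      + (f3 + (X 0 ^ 2 * X 1 * q0 + X 1 ^ 2 * X 2 * q1 + X 0 * X 2 ^ 2 * q2))
        * (X 0 * X 1 * X 2) = 0 := by
    linear_combination hf - (X 0 ^ 3 * X 1 ^ 2) * h0 - (X 1 ^ 3 * X 2 ^ 2) * h1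
      - (X 0 ^ 2 * X 2 ^ 3) * h2
  have hr0z : σ K 2 f0 = 0 := by
    have := congrArg (σ K 2) hf'
    simpa [map_add, map_mul, map_pow, σ_X, σ_idem, X_pow_ne] using this
  have hr1z : σ K 0 f1 = 0 := by
    have := congrArg (σ K 0) hf'
    simpa [map_add, map_mul, map_pow, σ_X, σ_idem, X_pow_ne] using this
  have hr2z : σ K 1 f2 = 0 := by
    have := congrArg (σ K 1) hf'
    simpa [map_add, map_mul, map_pow, σ_X, σ_idem, X_pow_ne] using this
  have hhz : f3 + (X 0 ^ 2 * X 1 * q0 + X 1 ^ 2 * X 2 * q1 + X 0 * X 2 ^ 2 * q2) = 0 := by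
    rw [hr0z, hr1z, hr2z] at hf'
    have e3 := hf'
    simp only [zero_mul, zero_add] at e3
    rcases mul_eq_zero.1 e3 with h' | h'
    · exact h'
    · exact absurd h' (mul_ne_zero (mul_ne_zero (X_ne_zero 0) (X_ne_zero 1)) (X_ne_zero 2))
  refine ⟨q0, q1, q2, ?_, ?_, ?_, ?_⟩
  · rw [hr0z, sub_zero] at h0; exact h0
  · rw [hr1z, sub_zero] at h1; exact h1
  · rw [hr2z, sub_zero] at h2; exact h2
  · linear_combination hhz


noncomputable def d1 : (Fin 4 → S) →ₗ[S] S where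
  toFun f := f 0 * (X 0 ^ 3 * X 1 ^ 2) + f 1 * (X 1 ^ 3 * X 2 ^ 2)
    + f 2 * (X 0 ^ 2 * X 2 ^ 3) + f 3 * (X 0 * X 1 * X 2)
  map_add' x y := by simp only [Pi.add_apply]; ring
  map_smul' r x := by simp only [Pi.smul_apply, smul_eq_mul, RingHom.id_apply]; ring

noncomputable def d2 : (Fin 3 → S) →ₗ[S] (Fin 4 → S) where
  toFun g := ![X 2 * g 0, X 0 * g 1, X 1 * g 2,
    -(X 0 ^ 2 * X 1 * g 0 + X 1 ^ 2 * X 2 * g 1 + X 0 * X 2 ^ 2 * g 2)]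
  map_add' x y := by
    funext i
    fin_cases i <;> (simp; try ring)
  map_smul' r x := by
    funext i
    fin_cases i <;> (simp; try ring)

lemma d2_apply (g : Fin 3 → S) : d2 K g = ![X 2 * g 0, X 0 * g 1, X 1 * g 2,
    -(X 0 ^ 2 * X 1 * g 0 + X 1 ^ 2 * X 2 * g 1 + X 0 * X 2 ^ 2 * g 2)] := rfl

lemma d1_apply (f : Fin 4 → S) : d1 K f = f 0 * (X 0 ^ 3 * X 1 ^ 2) + f 1 * (X 1 ^ 3 * X 2 ^ 2)
    + f 2 * (X 0 ^ 2 * X 2 ^ 3) + f 3 * (X 0 * X 1 * X 2) := rfl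

lemma d1_comp_d2 (g : Fin 3 → S) : d1 K (d2 K g) = 0 := by
  rw [d2_apply, d1_apply]
  simp only [Matrix.cons_val_zero, Matrix.cons_val_one, Matrix.head_cons, Matrix.cons_val_two,
    Matrix.tail_cons, Matrix.cons_val_three, Matrix.cons_val_fin_one]
  ring

lemma d2_inj (g : Fin 3 → S) (h : d2 K g = 0) : g = 0 := by
  rw [d2_apply] at h
  have h0 := congrFun h 0
  have h1 := congrFun h 1
  have h2 := congrFun h 2
  simp only [Matrix.cons_val_zero, Matrix.cons_val_one, Matrix.head_cons, Matrix.cons_val_two,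
    Matrix.tail_cons, Pi.zero_apply] at h0 h1 h2
  funext i
  fin_cases i
  · simpa using (mul_eq_zero.1 h0).resolve_left (X_ne_zero 2)
  · simpa using (mul_eq_zero.1 h1).resolve_left (X_ne_zero 0)
  · simpa using (mul_eq_zero.1 h2).resolve_left (X_ne_zero 1)

lemma exact_mid (f : Fin 4 → S) (hf : d1 K f = 0) : ∃ g : Fin 3 → S, d2 K g = f := by
  rw [d1_apply] at hf
  obtain ⟨q0, q1, q2, e0, e1, e2, e3⟩ := syz K (f 0) (f 1) (f 2) (f 3) hf
  refine ⟨![q0, q1, q2], ?_⟩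
  rw [d2_apply]
  funext i
  fin_cases i <;>
    simp [e0, e1, e2, e3, Matrix.cons_val_zero, Matrix.cons_val_one, Matrix.head_cons]


open CategoryTheory Limits

noncomputable def I0 : Ideal S :=
  Ideal.span {X 0 ^ 3 * X 1 ^ 2, X 1 ^ 3 * X 2 ^ 2, X 0 ^ 2 * X 2 ^ 3, X 0 * X 1 * X 2}

noncomputable def Xs : ℕ → ModuleCat S
  | 0 => ModuleCat.of S S
  | 1 => ModuleCat.of S (Fin 4 → S)
  | 2 => ModuleCat.of S (Fin 3 → S)
  | _ + 3 => ModuleCat.of S PUnit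

noncomputable def ds : ∀ n : ℕ, Xs K (n + 1) ⟶ Xs K n
  | 0 => ModuleCat.ofHom (d1 K)
  | 1 => ModuleCat.ofHom (d2 K)
  | _ + 2 => 0

lemma sq : ∀ n : ℕ, ds K (n + 1) ≫ ds K n = 0
  | 0 => by
      apply ModuleCat.hom_ext; apply LinearMap.ext
      intro g
      exact d1_comp_d2 K g
  | n + 1 => by
      show ds K (n + 2) ≫ ds K (n + 1) = 0
      show (0 : Xs K (n + 3) ⟶ Xs K (n + 2)) ≫ ds K (n + 1) = 0
      simp

noncomputable def cpx : ChainComplex (ModuleCat S) ℕ :=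
  ChainComplex.of (Xs K) (ds K) (sq K)

lemma cpx_d10 : (cpx K).d 1 0 = ModuleCat.ofHom (d1 K) := ChainComplex.of_d (Xs K) (ds K) 0
lemma cpx_d21 : (cpx K).d 2 1 = ModuleCat.ofHom (d2 K) := ChainComplex.of_d (Xs K) (ds K) 1
lemma cpx_d32 : (cpx K).d 3 2 = 0 := ChainComplex.of_d (Xs K) (ds K) 2

lemma mem_I0 (f : Fin 4 → S) : d1 K f ∈ I0 K := by
  rw [d1_apply, I0]
  refine Ideal.add_mem _ (Ideal.add_mem _ (Ideal.add_mem _ ?_ ?_) ?_) ?_ <;>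
    exact Ideal.mul_mem_left _ _ (Ideal.subset_span (by simp))

lemma I0_sub (x : S) (hx : x ∈ I0 K) : ∃ f : Fin 4 → S, d1 K f = x := by
  rw [I0] at hx
  rw [show ({X 0 ^ 3 * X 1 ^ 2, X 1 ^ 3 * X 2 ^ 2, X 0 ^ 2 * X 2 ^ 3, X 0 * X 1 * X 2} : Set S)
      = Set.range ![X 0 ^ 3 * X 1 ^ 2, X 1 ^ 3 * X 2 ^ 2, X 0 ^ 2 * X 2 ^ 3, X 0 * X 1 * X 2]
    from by
      simp only [Matrix.range_cons, Matrix.range_empty, Set.union_empty, Set.union_singleton]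
      apply Set.ext; intro y
      simp only [Set.mem_insert_iff, Set.mem_union, Set.mem_singleton_iff]
      tauto] at hx
  rw [Ideal.span, Submodule.mem_span_range_iff_exists_fun] at hx
  obtain ⟨c, hc⟩ := hx
  refine ⟨c, ?_⟩
  rw [d1_apply, ← hc, Fin.sum_univ_four]
  simp only [smul_eq_mul, Matrix.cons_val_zero, Matrix.cons_val_one, Matrix.head_cons,
    Matrix.cons_val_two, Matrix.tail_cons, Matrix.cons_val_three]

noncomputable def M0 : ModuleCat S := ModuleCat.of S (S ⧸ I0 K)

noncomputable def pr0 : (cpx K).X 0 ⟶ M0 K := ModuleCat.ofHom (Submodule.mkQ (I0 K))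

lemma d10_pr0 : (cpx K).d 1 0 ≫ pr0 K = 0 := by
  rw [cpx_d10]
  apply ModuleCat.hom_ext; apply LinearMap.ext
  intro f
  show Submodule.mkQ (I0 K) (d1 K f) = 0
  rw [Submodule.mkQ_apply, Submodule.Quotient.mk_eq_zero]
  exact mem_I0 K f

noncomputable def π0 : cpx K ⟶ (ChainComplex.single₀ (ModuleCat S)).obj (M0 K) :=
  (ChainComplex.toSingle₀Equiv _ _).symm ⟨pr0 K, d10_pr0 K⟩


lemma isZero_Xs (n : ℕ) : IsZero (Xs K (n + 3)) := by
  haveI : Subsingleton (Xs K (n + 3)) := by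
    show Subsingleton PUnit; infer_instance
  exact ModuleCat.isZero_of_subsingleton _

lemma exactAt_one : (cpx K).ExactAt 1 := by
  rw [HomologicalComplex.exactAt_iff' _ 2 1 0 (by simp) (by simp)]
  rw [ShortComplex.moduleCat_exact_iff]
  intro f hf
  have hf' : d1 K f = 0 := by
    have : (cpx K).d 1 0 f = 0 := hf
    rwa [cpx_d10] at this
  obtain ⟨g, hg⟩ := exact_mid K f hf'
  refine ⟨g, ?_⟩
  show (cpx K).d 2 1 g = f
  rw [cpx_d21]
  exact hg

lemma exactAt_two : (cpx K).ExactAt 2 := by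
  rw [HomologicalComplex.exactAt_iff' _ 3 2 1 (by simp) (by simp)]
  rw [ShortComplex.moduleCat_exact_iff]
  intro g hg
  have hg' : d2 K g = 0 := by
    have : (cpx K).d 2 1 g = 0 := hg
    rwa [cpx_d21] at this
  refine ⟨0, ?_⟩
  show (cpx K).d 3 2 0 = g
  rw [cpx_d32]
  rw [d2_inj K g hg']
  rfl

lemma exactAt_big (n : ℕ) : (cpx K).ExactAt (n + 3) := by
  rw [HomologicalComplex.exactAt_iff]
  exact ShortComplex.exact_of_isZero_X₂ _ (isZero_Xs K n)

lemma pr0_surj : Function.Surjective (pr0 K) :=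
  show Function.Surjective (Submodule.mkQ (I0 K)) from Submodule.mkQ_surjective _

noncomputable def res : ProjectiveResolution (M0 K) where
  complex := cpx K
  projective n := by
    match n with
    | 0 => exact ModuleCat.projective_of_free (Module.Basis.singleton PUnit.{1} S)
    | 1 => exact ModuleCat.projective_of_free (Pi.basisFun S (Fin 4))
    | 2 => exact ModuleCat.projective_of_free (Pi.basisFun S (Fin 3))
    | n + 3 => exact (isZero_Xs K n).projective
  π := π0 K
  quasiIso := ⟨fun n => by
    match n with
    | 0 =>
        rw [quasiIsoAt_iff' _ 1 0 0 (by simp) (by simp)]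
        rw [ShortComplex.quasiIso_iff_of_zeros' _ ((cpx K).shape 0 0 (by simp)) (by simp; rfl) (by simp; rfl)]
        constructor
        · rw [ShortComplex.moduleCat_exact_iff]
          intro x hx
          have hx' : x ∈ I0 K := by
            have : pr0 K x = 0 := by
              have e : (π0 K).f 0 = pr0 K := ChainComplex.toSingle₀Equiv_symm_apply_f_zero _ _
              rw [← e]
              exact hx
            exact (Submodule.Quotient.mk_eq_zero (I0 K) (x := (x : S))).1 this
          obtain ⟨f, hf⟩ := I0_sub K x hx'
          refine ⟨f, ?_⟩
          show (cpx K).d 1 0 f = x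
          rw [cpx_d10]; exact hf
        · have e : (π0 K).f 0 = pr0 K := ChainComplex.toSingle₀Equiv_symm_apply_f_zero _ _
          show Epi ((π0 K).f 0)
          rw [ModuleCat.epi_iff_surjective, e]
          exact pr0_surj K
    | n + 1 =>
        rw [quasiIsoAt_iff_exactAt' _ _ (ChainComplex.exactAt_succ_single_obj _ _)]
        match n with
        | 0 => exact exactAt_one K
        | 1 => exact exactAt_two K
        | n + 2 => exact exactAt_big K n⟩


lemma subsingleton_of_isZero {R : Type} [CommRing R] {A : ModuleCat R} (h : IsZero A) :
    Subsingleton A := by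
  rw [IsZero.iff_id_eq_zero] at h
  refine ⟨fun x y => ?_⟩
  have hx : (𝟙 A : A ⟶ A) x = (0 : A ⟶ A) x := by rw [h]
  have hy : (𝟙 A : A ⟶ A) y = (0 : A ⟶ A) y := by rw [h]
  have hx' : x = 0 := hx
  have hy' : y = 0 := hy
  rw [hx', hy']

lemma subsingleton_of_iso {R : Type} [CommRing R] {A B : ModuleCat R} (e : A ≅ B)
    (h : Subsingleton B) : Subsingleton A := by
  refine ⟨fun x y => ?_⟩
  have h1 : (e.hom ≫ e.inv) x = x := by rw [e.hom_inv_id]; rfl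
  have h2 : (e.hom ≫ e.inv) y = y := by rw [e.hom_inv_id]; rfl
  have h3 : e.hom x = e.hom y := Subsingleton.elim _ _
  calc x = (e.hom ≫ e.inv) x := h1.symm
    _ = e.inv (e.hom x) := rfl
    _ = e.inv (e.hom y) := by rw [h3]
    _ = (e.hom ≫ e.inv) y := rfl
    _ = y := h2

lemma subsingleton_ext3 (N : ModuleCat S) :
    Subsingleton (((Ext (MvPolynomial (Fin 3) K) (ModuleCat S) 3).obj
      (Opposite.op (M0 K))).obj N) := by
  apply subsingleton_of_iso ((res K).isoExt 3 N)
  apply subsingleton_of_isZero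
  rw [← HomologicalComplex.exactAt_iff_isZero_homology, HomologicalComplex.exactAt_iff]
  refine ShortComplex.exact_of_isZero_X₂ _ ?_
  refine @ModuleCat.isZero_of_subsingleton _ _ _ ?_
  show Subsingleton ((cpx K).X 3 ⟶ N)
  refine ⟨fun f g => ModuleCat.hom_ext (LinearMap.ext fun x => ?_)⟩
  have hx : x = 0 := Subsingleton.elim (α := PUnit) x 0
  rw [hx]
  show f 0 = g 0
  rw [map_zero, map_zero]

lemma Lexact (N : ModuleCat S) (i : ℕ)
    (h : Subsingleton (((cpx K).linearYonedaObj (MvPolynomial (Fin 3) K) N).homology (i + 1)))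
    (φ : (cpx K).X (i + 1) ⟶ N) (hφ : (cpx K).d (i + 2) (i + 1) ≫ φ = 0) :
    ∃ ψ : (cpx K).X i ⟶ N, (cpx K).d (i + 1) i ≫ ψ = φ := by
  have hex : (((cpx K).linearYonedaObj (MvPolynomial (Fin 3) K) N)).ExactAt (i + 1) := by
    rw [HomologicalComplex.exactAt_iff_isZero_homology]
    exact @ModuleCat.isZero_of_subsingleton _ _ _ h
  rw [HomologicalComplex.exactAt_iff' _ i (i + 1) (i + 2) (by simp) (by simp),
    ShortComplex.moduleCat_exact_iff] at hex
  have hφ' : (((cpx K).linearYonedaObj (MvPolynomial (Fin 3) K) N).d (i + 1) (i + 2)) φ = 0 := by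
    simp only [ChainComplex.linearYonedaObj_d]
    show Linear.leftComp (MvPolynomial (Fin 3) K) N ((cpx K).d (i + 2) (i + 1)) φ = 0
    rw [Linear.leftComp_apply]
    exact hφ
  obtain ⟨ψ, hψ⟩ := hex φ hφ'
  refine ⟨ψ, ?_⟩
  have : (((cpx K).linearYonedaObj (MvPolynomial (Fin 3) K) N).d i (i + 1)) ψ = φ := hψ
  simp only [ChainComplex.linearYonedaObj_d] at this
  have h2 : Linear.leftComp (MvPolynomial (Fin 3) K) N ((cpx K).d (i + 1) i) ψ = φ := this
  exact h2

noncomputable def Jm : Ideal S := Ideal.span {X 0, X 1, X 2}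

lemma mem_Jm_smul {s : S} (hs : s ∈ Jm K) (y : S ⧸ Jm K) : s • y = 0 := by
  obtain ⟨t, rfl⟩ := Submodule.mkQ_surjective (Jm K) y
  show s • Submodule.Quotient.mk t = 0
  rw [← Submodule.Quotient.mk_smul, Submodule.Quotient.mk_eq_zero]
  exact Ideal.mul_mem_right t _ hs

lemma X_mem_Jm (i : Fin 3) : (X i : S) ∈ Jm K :=
  Ideal.subset_span (by fin_cases i <;> simp)

lemma one_notin_Jm : (1 : S) ∉ Jm K := by
  intro h
  have hle : Jm K ≤ RingHom.ker (constantCoeff (R := K) (σ := Fin 3)) := by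
    rw [Jm, Ideal.span_le]
    intro y hy
    simp only [Set.mem_insert_iff, Set.mem_singleton_iff] at hy
    rcases hy with rfl | rfl | rfl <;> simp [RingHom.mem_ker]
  have := hle h
  rw [RingHom.mem_ker, map_one] at this
  exact one_ne_zero this

noncomputable def Nm : ModuleCat S := ModuleCat.of S (S ⧸ Jm K)

lemma mk_one_ne_zero : (Submodule.Quotient.mk 1 : S ⧸ Jm K) ≠ 0 := by
  rw [Ne, Submodule.Quotient.mk_eq_zero]
  exact one_notin_Jm K

noncomputable def φ1 : (cpx K).X 1 ⟶ Nm K :=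
  ModuleCat.ofHom ((Submodule.mkQ (Jm K)).comp (LinearMap.proj 0) : (Fin 4 → S) →ₗ[S] (S ⧸ Jm K))

noncomputable def φ2 : (cpx K).X 2 ⟶ Nm K :=
  ModuleCat.ofHom ((Submodule.mkQ (Jm K)).comp (LinearMap.proj 0) : (Fin 3 → S) →ₗ[S] (S ⧸ Jm K))

lemma not_subsingleton_ext1 :
    ¬ Subsingleton (((Ext (MvPolynomial (Fin 3) K) (ModuleCat S) 1).obj
      (Opposite.op (M0 K))).obj (Nm K)) := by
  intro h
  have h1 : Subsingleton (((cpx K).linearYonedaObj (MvPolynomial (Fin 3) K)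
      (Nm K)).homology (0 + 1)) :=
    subsingleton_of_iso ((res K).isoExt 1 (Nm K)).symm h
  have hφ : (cpx K).d 2 1 ≫ φ1 K = 0 := by
    rw [cpx_d21]
    apply ModuleCat.hom_ext; apply LinearMap.ext
    intro v
    show Submodule.mkQ (Jm K) ((d2 K v) 0) = 0
    show Submodule.mkQ (Jm K) (X 2 * v 0) = 0
    rw [Submodule.mkQ_apply, Submodule.Quotient.mk_eq_zero]
    exact Ideal.mul_mem_right _ _ (X_mem_Jm K 2)
  obtain ⟨ψ, hψ⟩ := Lexact K (Nm K) 0 h1 (φ1 K) hφ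
  rw [cpx_d10] at hψ
  have key := LinearMap.congr_fun (congrArg ModuleCat.Hom.hom hψ) (Pi.single 0 1 : Fin 4 → S)
  have hm : d1 K (Pi.single 0 1 : Fin 4 → S) = X 0 ^ 3 * X 1 ^ 2 := by
    rw [d1_apply]; simp
  have lhs : ψ (d1 K (Pi.single 0 1 : Fin 4 → S)) = 0 := by
    rw [hm]
    have h2 : ψ (X 0 ^ 3 * X 1 ^ 2 : S) = (X 0 ^ 3 * X 1 ^ 2 : S) • ψ (1 : S) := by
      have := ψ.hom.map_smul (X 0 ^ 3 * X 1 ^ 2 : S) (1 : S)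
      exact (congrArg ψ.hom (mul_one (X 0 ^ 3 * X 1 ^ 2 : S)).symm).trans this
    rw [h2]
    apply mem_Jm_smul
    exact Ideal.mul_mem_right _ _ (Ideal.pow_mem_of_mem _ (X_mem_Jm K 0) 3 (by norm_num))
  have rhs : φ1 K (Pi.single 0 1 : Fin 4 → S) = Submodule.Quotient.mk 1 := by
    show Submodule.mkQ (Jm K) ((Pi.single 0 1 : Fin 4 → S) 0) = _
    simp
  have : ψ (d1 K (Pi.single 0 1 : Fin 4 → S)) = φ1 K (Pi.single 0 1 : Fin 4 → S) := key
  rw [lhs, rhs] at this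
  exact mk_one_ne_zero K this.symm

lemma not_subsingleton_ext2 :
    ¬ Subsingleton (((Ext (MvPolynomial (Fin 3) K) (ModuleCat S) 2).obj
      (Opposite.op (M0 K))).obj (Nm K)) := by
  intro h
  have h1 : Subsingleton (((cpx K).linearYonedaObj (MvPolynomial (Fin 3) K)
      (Nm K)).homology (1 + 1)) :=
    subsingleton_of_iso ((res K).isoExt 2 (Nm K)).symm h
  have hφ : (cpx K).d 3 2 ≫ φ2 K = 0 := by
    rw [cpx_d32, zero_comp]
  obtain ⟨ψ, hψ⟩ := Lexact K (Nm K) 1 h1 (φ2 K) hφ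
  rw [cpx_d21] at hψ
  have key := LinearMap.congr_fun (congrArg ModuleCat.Hom.hom hψ) (Pi.single 0 1 : Fin 3 → S)
  have hw : d2 K (Pi.single 0 1 : Fin 3 → S)
      = (X 2 : S) • (Pi.single 0 1 : Fin 4 → S)
        + (-(X 0 ^ 2 * X 1) : S) • (Pi.single 3 1 : Fin 4 → S) := by
    rw [d2_apply]
    funext i
    fin_cases i <;> simp
  have lhs : ψ (d2 K (Pi.single 0 1 : Fin 3 → S)) = 0 := by
    erw [hw, map_add, map_smul, map_smul]
    have e1 := mem_Jm_smul K (X_mem_Jm K 2) (ψ (Pi.single 0 1 : Fin 4 → S))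
    have e2 := mem_Jm_smul K (neg_mem (Ideal.mul_mem_left _ _ (X_mem_Jm K 1)) :
      -(X 0 ^ 2 * X 1) ∈ Jm K) (ψ (Pi.single 3 1 : Fin 4 → S))
    exact (congrArg₂ (· + ·) e1 e2).trans (add_zero 0)
  have rhs : φ2 K (Pi.single 0 1 : Fin 3 → S) = Submodule.Quotient.mk 1 := by
    show Submodule.mkQ (Jm K) ((Pi.single 0 1 : Fin 3 → S) 0) = _
    simp
  have : ψ (d2 K (Pi.single 0 1 : Fin 3 → S)) = φ2 K (Pi.single 0 1 : Fin 3 → S) := key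
  rw [lhs, rhs] at this
  exact mk_one_ne_zero K this.symm

end PdAux



open PdAux in
/-- For `I = (a³b², b³c², a²c³, abc)` in `S = K[a,b,c]` (with minimal generating set `G`
given by the corresponding exponent vectors), `L = {a³b², b³c², a²c³}` is a dominant
subset of `G(I)` of maximum cardinality among dominant subsets of `G(I)`, yet
`projdim (S/I) = 2`. -/
theorem example_dominant_three_but_pd_two (K : Type) [Field K]
    (I : Ideal (MvPolynomial (Fin 3) K))
    (hI : I = Ideal.span {X 0 ^ 3 * X 1 ^ 2, X 1 ^ 3 * X 2 ^ 2, X 0 ^ 2 * X 2 ^ 3,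
      X 0 * X 1 * X 2})
    (G L : Finset (Fin 3 → ℕ))
    (hG : G = {![3, 2, 0], ![0, 3, 2], ![2, 0, 3], ![1, 1, 1]})
    (hL : L = {![3, 2, 0], ![0, 3, 2], ![2, 0, 3]}) :
    L ⊆ G ∧ DominantSet L ∧ (∀ L' ⊆ G, DominantSet L' → L'.card ≤ L.card) ∧
      projDim (MvPolynomial (Fin 3) K)
        (ModuleCat.of (MvPolynomial (Fin 3) K) (MvPolynomial (Fin 3) K ⧸ I)) =
        (2 : ℕ∞) := by
  subst hI hG hL
  refine ⟨by decide, by decide, ?_, ?_⟩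
  · intro L' hsub hdom
    by_contra hlt
    push_neg at hlt
    have h3 : ({![3, 2, 0], ![0, 3, 2], ![2, 0, 3]} : Finset (Fin 3 → ℕ)).card = 3 := by decide
    have h4 : ({![3, 2, 0], ![0, 3, 2], ![2, 0, 3], ![1, 1, 1]} :
        Finset (Fin 3 → ℕ)).card = 4 := by decide
    have hle : L'.card ≤ 4 := h4 ▸ Finset.card_le_card hsub
    rw [h3] at hlt
    have heq : L' = ({![3, 2, 0], ![0, 3, 2], ![2, 0, 3], ![1, 1, 1]} :
        Finset (Fin 3 → ℕ)) := Finset.eq_of_subset_of_card_le hsub (by omega)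
    rw [heq] at hdom
    exact (by decide : ¬ DominantSet {![3, 2, 0], ![0, 3, 2], ![2, 0, 3], ![1, 1, 1]}) hdom
  · unfold projDim
    apply le_antisymm
    · apply sInf_le
      refine ⟨2, fun N => PdAux.subsingleton_ext3 K N, ?_⟩
      norm_cast
    · apply le_sInf
      rintro x ⟨d, hd, rfl⟩
      match d with
      | 0 => exact absurd (hd (PdAux.Nm K)) (PdAux.not_subsingleton_ext1 K)
      | 1 => exact absurd (hd (PdAux.Nm K)) (PdAux.not_subsingleton_ext2 K)
      | (n + 2) =>
          show (2 : ℕ∞) ≤ ((n + 2 : ℕ) : ℕ∞)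
          exact_mod_cast Nat.le_add_left 2 n
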